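/- Let D ⊆ ℝ² be open, let ψ₁, ψ₂ : D → ℂ′ be differentiable, and let 𝒰 : D → ℂ′ satisfy Re 𝒰 = 0 pointwise (𝒰 is purely imaginary). Assume the nonlinear Dirac equations ∂_z ψ₂ + 𝒰ψ₁ = 0 and −∂_z̄ ψ₁ + 𝒰ψ₂ = 0 hold on D. Fix ε ∈ {i′, −i′} and define φ₁ := ε(ψ̄₂² + ψ₁²), φ₂ := ε·i′·(ψ̄₂² − ψ₁²), φ₃ := 2·i′·ψ₁ψ̄₂. Then ∂_z̄ φⱼ = ∂_z (φ̄ⱼ) on D for j = 1, 2, 3; equivalently, the ℂ′³-valued 1-form Φ dz + Φ̄ dz̄ with Φ = (φ₂, φ₁, φ₃) is closed, so the Weierstrass-type integral f(z) = f(z₀) + Re ∫ Φ dz defining a timelike surface in Minkowski 3-space is path-independent on simply connected domains. -/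

import Mathlib

noncomputable section

/-- Para-complex numbers modeled as the product ring ℝ × ℝ. -/
abbrev Cp : Type := ℝ × ℝ

/-- The para-complex unit i′ = (1, -1), satisfying i′² = 1. -/
def ip : Cp := (1, -1)

/-- Para-complex conjugation. -/
def pconj (z : Cp) : Cp := (z.2, z.1)

/-- Real part of a para-complex number. -/
def pRe (z : Cp) : ℝ := (z.1 + z.2) / 2

/-- Imaginary part of a para-complex number. -/
def pIm (z : Cp) : ℝ := (z.1 - z.2) / 2

/-- Embedding of ℝ into the para-complex numbers. -/
def oR (r : ℝ) : Cp := (r, r)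

/-- The exponential of the Banach algebra ℝ × ℝ (componentwise real exponential). -/
def pexp (z : Cp) : Cp := (Real.exp z.1, Real.exp z.2)

/-- The para-complex derivative ∂_z f = ½(∂ₓf + i′ ∂_y f). -/
def dz (f : Cp → Cp) (p : Cp) : Cp :=
  oR (1/2) * (fderiv ℝ f p (1, 0) + ip * fderiv ℝ f p (0, 1))

/-- The para-complex derivative ∂_z̄ f = ½(∂ₓf − i′ ∂_y f). -/
def dzbar (f : Cp → Cp) (p : Cp) : Cp :=
  oR (1/2) * (fderiv ℝ f p (1, 0) - ip * fderiv ℝ f p (0, 1))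

/-- For solutions of the nonlinear Dirac equation with purely imaginary potential, the
Weierstrass integrand is closed: ∂_z̄ φⱼ = ∂_z φ̄ⱼ for j = 1, 2, 3, so the
Weierstrass-type integral is path-independent on simply connected domains. -/
lemma pconj_mul (z w : Cp) : pconj (z*w) = pconj z * pconj w := rfl
lemma pconj_neg (z : Cp) : pconj (-z) = -pconj z := rfl
lemma pconj_ip : pconj ip = -ip := by
  apply Prod.ext <;> simp [pconj, ip]

lemma fderiv_pconj (f : Cp → Cp) (p v : Cp) :
    fderiv ℝ (fun r => pconj (f r)) p v = pconj (fderiv ℝ f p v) := by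
  have h : (fun r => pconj (f r)) = (ContinuousLinearEquiv.prodComm ℝ ℝ ℝ) ∘ f := rfl
  rw [h, ContinuousLinearEquiv.comp_fderiv]
  rfl

lemma pconj_half_mul (w : Cp) : pconj (oR (1/2) * w) = oR (1/2) * pconj w := rfl

lemma dz_pconj (f : Cp → Cp) (p : Cp) :
    dz (fun r => pconj (f r)) p = pconj (dzbar f p) := by
  simp only [dz, dzbar, fderiv_pconj]
  apply Prod.ext <;> simp [pconj, ip, oR] <;> ring

lemma dzbar_pconj (f : Cp → Cp) (p : Cp) :
    dzbar (fun r => pconj (f r)) p = pconj (dz f p) := by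
  simp only [dz, dzbar, fderiv_pconj]
  apply Prod.ext <;> simp [pconj, ip, oR] <;> ring

lemma dzbar_mul (f g : Cp → Cp) (p : Cp) (hf : DifferentiableAt ℝ f p)
    (hg : DifferentiableAt ℝ g p) :
    dzbar (fun r => f r * g r) p = dzbar f p * g p + f p * dzbar g p := by
  simp only [dzbar, fderiv_fun_mul hf hg, ContinuousLinearMap.add_apply,
    ContinuousLinearMap.smul_apply, smul_eq_mul]
  ring

lemma dzbar_add (f g : Cp → Cp) (p : Cp) (hf : DifferentiableAt ℝ f p)
    (hg : DifferentiableAt ℝ g p) :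
    dzbar (fun r => f r + g r) p = dzbar f p + dzbar g p := by
  simp only [dzbar, fderiv_fun_add hf hg]
  simp only [ContinuousLinearMap.add_apply]
  ring

lemma dzbar_sub (f g : Cp → Cp) (p : Cp) (hf : DifferentiableAt ℝ f p)
    (hg : DifferentiableAt ℝ g p) :
    dzbar (fun r => f r - g r) p = dzbar f p - dzbar g p := by
  simp only [dzbar, fderiv_fun_sub hf hg]
  simp only [ContinuousLinearMap.sub_apply]
  ring

lemma dzbar_const_mul (c : Cp) (g : Cp → Cp) (p : Cp) (hg : DifferentiableAt ℝ g p) :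
    dzbar (fun r => c * g r) p = c * dzbar g p := by
  have h := dzbar_mul (fun _ => c) g p (differentiableAt_const c) hg
  have hc : dzbar (fun _ : Cp => c) p = 0 := by
    simp [dzbar, fderiv_const]
  rw [h, hc, zero_mul, zero_add]

lemma dzbar_sq (f : Cp → Cp) (p : Cp) (hf : DifferentiableAt ℝ f p) :
    dzbar (fun r => f r ^ 2) p = 2 * f p * dzbar f p := by
  have h : (fun r => f r ^ 2) = fun r => f r * f r := by funext r; ring
  rw [h, dzbar_mul f f p hf hf]; ring

theorem weierstrass_integrand_closed (D : Set Cp) (hD : IsOpen D)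
    (ψ₁ ψ₂ U : Cp → Cp)
    (hψ₁ : DifferentiableOn ℝ ψ₁ D) (hψ₂ : DifferentiableOn ℝ ψ₂ D)
    (hU : ∀ q, pRe (U q) = 0)
    (hDirac : ∀ q ∈ D, dz ψ₂ q + U q * ψ₁ q = 0 ∧ -(dzbar ψ₁ q) + U q * ψ₂ q = 0)
    (ε : Cp) (hε : ε = ip ∨ ε = -ip)
    (φ₁ φ₂ φ₃ : Cp → Cp)
    (h1 : ∀ q, φ₁ q = ε * ((pconj (ψ₂ q)) ^ 2 + (ψ₁ q) ^ 2))
    (h2 : ∀ q, φ₂ q = ε * ip * ((pconj (ψ₂ q)) ^ 2 - (ψ₁ q) ^ 2))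
    (h3 : ∀ q, φ₃ q = 2 * ip * ψ₁ q * pconj (ψ₂ q)) :
    ∀ q ∈ D,
      dzbar φ₁ q = dz (fun r => pconj (φ₁ r)) q ∧
      dzbar φ₂ q = dz (fun r => pconj (φ₂ r)) q ∧
      dzbar φ₃ q = dz (fun r => pconj (φ₃ r)) q := by
  intro q hq
  have hmem : D ∈ nhds q := hD.mem_nhds hq
  have hd₁ : DifferentiableAt ℝ ψ₁ q := hψ₁.differentiableAt hmem
  have hd₂ : DifferentiableAt ℝ ψ₂ q := hψ₂.differentiableAt hmem
  have hd₂c : DifferentiableAt ℝ (fun r => pconj (ψ₂ r)) q := (ContinuousLinearEquiv.prodComm ℝ ℝ ℝ).differentiableAt.comp q hd₂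
  obtain ⟨hDir1, hDir2⟩ := hDirac q hq
  have hA : dzbar ψ₁ q = U q * ψ₂ q := by linear_combination -hDir2
  have hB : dz ψ₂ q = -(U q * ψ₁ q) := by linear_combination hDir1
  have hU' : pconj (U q) = -(U q) := by
    have h := hU q
    simp only [pRe] at h
    apply Prod.ext <;> simp [pconj] <;> linarith
  have hε' : pconj ε = -ε := by
    rcases hε with h | h <;> subst h
    · exact pconj_ip
    · rw [pconj_neg, pconj_ip, neg_neg]
  have hC : dzbar (fun r => pconj (ψ₂ r)) q = U q * pconj (ψ₁ q) := by
    rw [dzbar_pconj, hB, pconj_neg, pconj_mul, hU']; ring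
  refine ⟨?_, ?_, ?_⟩ <;> rw [dz_pconj]
  · have hφ : φ₁ = fun r => ε * ((pconj (ψ₂ r)) ^ 2 + (ψ₁ r) ^ 2) := funext h1
    have E1 : dzbar φ₁ q
        = ε * U q * (2 * (pconj (ψ₁ q) * pconj (ψ₂ q) + ψ₁ q * ψ₂ q)) := by
      rw [hφ, dzbar_const_mul _ (fun r => pconj (ψ₂ r) ^ 2 + ψ₁ r ^ 2) _ ((hd₂c.pow 2).add (hd₁.pow 2)),
        dzbar_add (fun r => pconj (ψ₂ r) ^ 2) (fun r => ψ₁ r ^ 2) _ (hd₂c.pow 2) (hd₁.pow 2),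
        dzbar_sq _ _ hd₂c, dzbar_sq _ _ hd₁, hC, hA]
      ring
    rw [E1, pconj_mul, pconj_mul, hε', hU']
    have hX : pconj (2 * (pconj (ψ₁ q) * pconj (ψ₂ q) + ψ₁ q * ψ₂ q))
        = 2 * (pconj (ψ₁ q) * pconj (ψ₂ q) + ψ₁ q * ψ₂ q) := by
      apply Prod.ext <;> simp [pconj] <;> ring
    rw [hX]; ring
  · have hφ : φ₂ = fun r => ε * ip * ((pconj (ψ₂ r)) ^ 2 - (ψ₁ r) ^ 2) := funext h2
    have E2 : dzbar φ₂ q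
        = ε * ip * U q * (2 * (pconj (ψ₁ q) * pconj (ψ₂ q) - ψ₁ q * ψ₂ q)) := by
      rw [hφ, dzbar_const_mul _ (fun r => pconj (ψ₂ r) ^ 2 - ψ₁ r ^ 2) _ ((hd₂c.pow 2).sub (hd₁.pow 2)),
        dzbar_sub (fun r => pconj (ψ₂ r) ^ 2) (fun r => ψ₁ r ^ 2) _ (hd₂c.pow 2) (hd₁.pow 2),
        dzbar_sq _ _ hd₂c, dzbar_sq _ _ hd₁, hC, hA]
      ring
    rw [E2, pconj_mul, pconj_mul, pconj_mul, hε', hU', pconj_ip]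
    have hX : pconj (2 * (pconj (ψ₁ q) * pconj (ψ₂ q) - ψ₁ q * ψ₂ q))
        = -(2 * (pconj (ψ₁ q) * pconj (ψ₂ q) - ψ₁ q * ψ₂ q)) := by
      apply Prod.ext <;> simp [pconj] <;> ring
    rw [hX]; ring
  · have hφ : φ₃ = fun r => (2 * ip) * (ψ₁ r * pconj (ψ₂ r)) :=
      funext fun r => by rw [h3 r]; ring
    have E3 : dzbar φ₃ q
        = 2 * ip * U q * (ψ₂ q * pconj (ψ₂ q) + ψ₁ q * pconj (ψ₁ q)) := by
      rw [hφ, dzbar_const_mul _ (fun r => ψ₁ r * pconj (ψ₂ r)) _ (hd₁.mul hd₂c),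
        dzbar_mul _ _ _ hd₁ hd₂c, hC, hA]
      ring
    rw [E3, pconj_mul, pconj_mul, pconj_mul, pconj_ip, hU']
    have hX : pconj (ψ₂ q * pconj (ψ₂ q) + ψ₁ q * pconj (ψ₁ q))
        = ψ₂ q * pconj (ψ₂ q) + ψ₁ q * pconj (ψ₁ q) := by
      apply Prod.ext <;> simp [pconj] <;> ring
    have h2c : pconj (2 : Cp) = 2 := rfl
    rw [hX, h2c]; ring
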